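/- Let r : ℝ → ℝ be an even function, positive at 0, with r(u+v)·r(0) = r(u)·r(v) for all u, v ≥ 0, and suppose r is a positive-definite function (i.e., for all n, all t₁,...,tₙ ∈ ℝ and c₁,...,cₙ ∈ ℝ, ∑ᵢ∑ⱼ cᵢcⱼ r(tᵢ - tⱼ) ≥ 0) with r(u) > 0 for u ≥ 0 and r continuous. Then r(u) = A·exp(-α|u|) for some A > 0 and α ≥ 0. -/
import Mathlib


theorem stmt_1 (r : ℝ → ℝ)
    (heven : ∀ u : ℝ, r (-u) = r u)
    (h0 : r 0 > 0)
    (hfe : ∀ u v : ℝ, 0 ≤ u → 0 ≤ v → r (u + v) * r 0 = r u * r v)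
    (hpd : ∀ (n : ℕ) (t c : Fin n → ℝ),
      0 ≤ ∑ i, ∑ j, c i * c j * r (t i - t j))
    (hpos : ∀ u : ℝ, 0 ≤ u → r u > 0)
    (hc : Continuous r) :
    ∃ A > (0 : ℝ), ∃ α ≥ (0 : ℝ), ∀ u : ℝ, r u = A * Real.exp (-α * |u|) := by
  set h : ℝ → ℝ := fun x => Real.log (r x) - Real.log (r 0) with hh
  have h0' : h 0 = 0 := by simp [hh]
  have hadd : ∀ u v : ℝ, 0 ≤ u → 0 ≤ v → h (u + v) = h u + h v := by
    intro u v hu hv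
    have key : Real.log (r (u + v) * r 0) = Real.log (r u * r v) := by
      rw [hfe u v hu hv]
    rw [Real.log_mul (hpos _ (add_nonneg hu hv)).ne' h0.ne',
        Real.log_mul (hpos _ hu).ne' (hpos _ hv).ne'] at key
    simp only [hh]
    linarith
  set H : ℝ → ℝ := fun u => h (max u 0) - h (max (-u) 0) with hH
  have hHnn : ∀ u : ℝ, 0 ≤ u → H u = h u := by
    intro u hu
    simp [hH, max_eq_left hu, max_eq_right (neg_nonpos.mpr hu), h0']
  have Hadd : ∀ u v : ℝ, H (u + v) = H u + H v := by
    have mixed : ∀ u v : ℝ, 0 ≤ u → v ≤ 0 → H (u + v) = H u + H v := by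
      intro u v hu hv
      have hHv : H v = -h (-v) := by
        simp [hH, max_eq_right hv, max_eq_left (neg_nonneg.mpr hv), h0']
      rcases le_total 0 (u + v) with hs | hs
      · have : h ((u + v) + (-v)) = h (u + v) + h (-v) :=
          hadd _ _ hs (neg_nonneg.mpr hv)
        simp only [add_neg_cancel_right] at this
        rw [hHnn _ hs, hHnn _ hu, hHv]; linarith
      · have hHs : H (u + v) = -h (-(u + v)) := by
          rw [hH]; dsimp only
          rw [max_eq_right hs, max_eq_left (neg_nonneg.mpr hs), h0', zero_sub]
        have : h (-(u + v) + u) = h (-(u + v)) + h u :=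
          hadd _ _ (neg_nonneg.mpr hs) hu
        have he : -(u + v) + u = -v := by ring
        rw [he] at this
        rw [hHs, hHnn _ hu, hHv]; linarith
    intro u v
    rcases le_total 0 u with hu | hu
    · rcases le_total 0 v with hv | hv
      · rw [hHnn _ (add_nonneg hu hv), hHnn _ hu, hHnn _ hv]
        exact hadd _ _ hu hv
      · exact mixed u v hu hv
    · rcases le_total 0 v with hv | hv
      · rw [add_comm, add_comm (H u)]; exact mixed v u hv hu
      · have hHe : ∀ w : ℝ, w ≤ 0 → H w = -h (-w) := by
          intro w hw
          simp [hH, max_eq_right hw, max_eq_left (neg_nonneg.mpr hw), h0']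
        rw [hHe _ (add_nonpos hu hv), hHe _ hu, hHe _ hv, neg_add,
            hadd _ _ (neg_nonneg.mpr hu) (neg_nonneg.mpr hv)]
        ring
  have Hcont : Continuous H := by
    have c1 : Continuous (fun u : ℝ => Real.log (r (max u 0))) := by
      apply Real.continuousOn_log.comp_continuous
        (hc.comp (continuous_id.max continuous_const))
      intro u
      exact (hpos _ (le_max_right u 0)).ne'
    have c2 : Continuous (fun u : ℝ => Real.log (r (max (-u) 0))) := by
      apply Real.continuousOn_log.comp_continuous
        (hc.comp (continuous_neg.max continuous_const))
      intro u
      exact (hpos _ (le_max_right (-u) 0)).ne'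
    rw [hH]
    exact ((c1.sub continuous_const).sub (c2.sub continuous_const))
  set F : ℝ →+ ℝ := AddMonoidHom.mk' H Hadd with hF
  have hlin : ∀ u : ℝ, H u = u * H 1 := by
    intro u
    have := (F.toRealLinearMap Hcont).map_smul u 1
    simpa [hF, smul_eq_mul] using this
  -- boundedness from positive definiteness
  have hbdd : ∀ x : ℝ, r x ≤ r 0 := by
    intro x
    have := hpd 2 ![x, 0] ![1, -1]
    simp [Fin.sum_univ_two, heven] at this
    linarith
  have hH1 : H 1 ≤ 0 := by
    rw [hHnn 1 zero_le_one]
    have : Real.log (r 1) ≤ Real.log (r 0) :=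
      Real.log_le_log (hpos 1 zero_le_one) (hbdd 1)
    simp only [hh]; linarith
  refine ⟨r 0, h0, -(H 1), by linarith, fun u => ?_⟩
  have habs : r |u| = r u := by
    rcases le_total 0 u with hu | hu
    · rw [abs_of_nonneg hu]
    · rw [abs_of_nonpos hu, heven]
  have h1 : h |u| = |u| * H 1 := by
    rw [← hHnn _ (abs_nonneg u), hlin]
  have h2 : Real.log (r |u|) = Real.log (r 0) + |u| * H 1 := by
    simp only [hh] at h1; linarith
  have h3 : r |u| = Real.exp (Real.log (r 0) + |u| * H 1) := by
    rw [← h2, Real.exp_log (hpos _ (abs_nonneg u))]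
  rw [← habs, h3, Real.exp_add, Real.exp_log h0]
  ring_nf
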